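/- Let G be a finite simple graph and let v be a cut vertex of G such that deleting v from G leaves at least 3 connected components. Then in every walk of G that visits every vertex of G, the vertex v occurs at least twice; equivalently, v is unbounded in every k-Unbounded Hamiltonian Path of G. -/

import Mathlib

open SimpleGraph

/-- A vertex `v` is a cut vertex of `G` if deleting it strictly increases the number of
connected components. -/
def IsCutVertex {V : Type*} (G : SimpleGraph V) (v : V) : Prop :=
  Nat.card G.ConnectedComponent < Nat.card (G.induce {w | w ≠ v}).ConnectedComponent

private lemma walk_avoid_component {V : Type*} (G : SimpleGraph V) (v : V)
    {a b : V} (P : G.Walk a b) (hP : v ∉ P.support) :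
    ∀ x (hx : x ≠ v) (ha : a ≠ v), x ∈ P.support →
      (G.induce {w | w ≠ v}).connectedComponentMk ⟨x, hx⟩ =
      (G.induce {w | w ≠ v}).connectedComponentMk ⟨a, ha⟩ := by
  induction P with
  | nil =>
    intro x hx ha hmem
    simp only [SimpleGraph.Walk.support_nil, List.mem_singleton] at hmem
    subst hmem; rfl
  | @cons u c w h P ih =>
    intro x hx ha hmem
    simp only [SimpleGraph.Walk.support_cons, List.mem_cons] at hmem hP
    push_neg at hP
    obtain ⟨hva, hvP⟩ := hP
    rcases hmem with rfl | hmem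
    · rfl
    · have hc : c ≠ v := fun hcv => hvP (hcv ▸ P.start_mem_support)
      have h1 := ih hvP x hx hc hmem
      have hadj : (G.induce {w | w ≠ v}).Adj ⟨u, ha⟩ ⟨c, hc⟩ := by
        simpa using h
      rw [h1, ← SimpleGraph.ConnectedComponent.connectedComponentMk_eq_of_adj hadj]

private lemma walk_from_v_component {V : Type*} (G : SimpleGraph V) (v : V)
    [hne : Nonempty (G.induce {w | w ≠ v}).ConnectedComponent]
    {t : V} (P : G.Walk v t) (hP : v ∉ P.support.tail) :
    ∃ c : (G.induce {w | w ≠ v}).ConnectedComponent,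
      ∀ x (hx : x ≠ v), x ∈ P.support →
        (G.induce {w | w ≠ v}).connectedComponentMk ⟨x, hx⟩ = c := by
  cases P with
  | nil =>
    obtain ⟨c⟩ := hne
    exact ⟨c, fun x hx hmem => by
      simp only [SimpleGraph.Walk.support_nil, List.mem_singleton] at hmem
      exact absurd hmem hx⟩
  | @cons u c w h P =>
    simp only [SimpleGraph.Walk.support_cons, List.tail_cons] at hP
    have hc : c ≠ v := fun hcv => hP (hcv ▸ P.start_mem_support)
    refine ⟨(G.induce {w | w ≠ v}).connectedComponentMk ⟨c, hc⟩, fun x hx hmem => ?_⟩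
    simp only [SimpleGraph.Walk.support_cons, List.mem_cons] at hmem
    rcases hmem with rfl | hmem
    · exact absurd rfl hx
    · exact walk_avoid_component G v P hP x hx hc hmem

/-- If `v` is a cut vertex of a finite simple graph `G` whose deletion leaves at least 3
connected components, then `v` occurs at least twice in every walk of `G` that visits every
vertex, i.e. `v` is unbounded in every k-Unbounded Hamiltonian Path of `G`. -/
theorem cut_vertex_three_components_unbounded_in_every_spanning_walk
    {V : Type*} [Fintype V] [DecidableEq V] (G : SimpleGraph V)
    (v : V) (hv : IsCutVertex G v)
    (h3 : 3 ≤ Nat.card (G.induce {w | w ≠ v}).ConnectedComponent)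
    {a b : V} (W : G.Walk a b) (hW : ∀ x : V, x ∈ W.support) :
    1 < W.support.count v := by
  by_contra hcon
  push_neg at hcon
  have hvsup : v ∈ W.support := hW v
  have hcount1 : W.support.count v = 1 :=
    le_antisymm hcon (List.count_pos_iff.mpr hvsup)
  have hne : Nonempty (G.induce {w | w ≠ v}).ConnectedComponent := by
    have hpos : 0 < Nat.card (G.induce {w | w ≠ v}).ConnectedComponent := by omega
    exact (Nat.card_pos_iff.mp hpos).1
  set W1 := W.takeUntil v hvsup with hW1
  set W2 := W.dropUntil v hvsup with hW2
  have hspec : W1.append W2 = W := W.take_spec hvsup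
  have hsupp : W.support = W1.support ++ W2.support.tail := by
    rw [← hspec, SimpleGraph.Walk.support_append]
  have hc1 : W1.support.count v = 1 := W.count_support_takeUntil_eq_one hvsup
  have hc2tail : W2.support.tail.count v = 0 := by
    have := hcount1
    rw [hsupp, List.count_append, hc1] at this
    omega
  have hv2 : v ∉ W2.support.tail := by
    rw [← List.count_pos_iff]
    omega
  -- W1 reversed is a walk from v to a with v not in the tail of its support
  have hv1 : v ∉ W1.reverse.support.tail := by
    have hrev : W1.reverse.support = v :: W1.reverse.support.tail := by
      rw [← SimpleGraph.Walk.support_eq_cons]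
    have hcrev : W1.reverse.support.count v = 1 := by
      rw [SimpleGraph.Walk.support_reverse, List.count_reverse, hc1]
    rw [hrev, List.count_cons_self] at hcrev
    rw [← List.count_pos_iff]
    omega
  obtain ⟨c1, hec1⟩ := walk_from_v_component G v W1.reverse hv1
  obtain ⟨c2, hec2⟩ := walk_from_v_component G v W2 hv2
  -- every connected component of the induced graph is c1 or c2
  have hsurj : Function.Surjective (fun i : Bool => if i then c1 else c2) := by
    intro c
    obtain ⟨⟨x, hx⟩, rfl⟩ := c.exists_rep
    have hxW : x ∈ W.support := hW x
    rw [hsupp, List.mem_append] at hxW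
    rcases hxW with hmem | hmem
    · refine ⟨true, ?_⟩
      have hm : x ∈ W1.reverse.support := by
        rw [SimpleGraph.Walk.support_reverse, List.mem_reverse]; exact hmem
      exact (hec1 x hx hm).symm
    · refine ⟨false, ?_⟩
      exact (hec2 x hx (List.mem_of_mem_tail hmem)).symm
  have hle : Nat.card (G.induce {w | w ≠ v}).ConnectedComponent ≤ Nat.card Bool :=
    Nat.card_le_card_of_surjective _ hsurj
  simp [Nat.card_eq_fintype_card] at hle h3
  omega
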